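/- Let F be a linearly ordered field with integer part I satisfying the ℙ property: for every irrational γ ∈ F with γ > 1 and every m ∈ I^{>0}, k ∈ I^{≥0}, the set N_γ ∩ (mI^{≥0} + k) contains a nonzero element. Let α ∈ F be irrational with α > 1 and let ρ ∈ F be rational with ρ > 1. Then none of the following holds: N_α ⊆ N_ρ; N_ρ ⊆ N_α; N_α ∩ N_ρ = {0}; N_α ∪ N_ρ = I^{≥0}. -/

import Mathlib

/-- `N_α`: the set `{⌊n·α⌋ : n ∈ I, n ≥ 0}`, where `fl` is the floor function
associated to the integer part `I` of `F`. -/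
def Nset {F : Type*} [Field F] [LinearOrder F] [IsStrictOrderedRing F] (I : Subring F) (fl : F → F) (α : F) : Set F :=
  {y | ∃ n, n ∈ I ∧ 0 ≤ n ∧ y = fl (n * α)}

/-- `I^{≥0}`: the nonnegative elements of `I`. -/
def Inonneg {F : Type*} [Field F] [LinearOrder F] [IsStrictOrderedRing F] (I : Subring F) : Set F :=
  {n | n ∈ I ∧ 0 ≤ n}

/-- The arithmetic progression `m·I^{≥0} + k = {m·t + k : t ∈ I, t ≥ 0}`. -/
def AP {F : Type*} [Field F] [LinearOrder F] [IsStrictOrderedRing F] (I : Subring F) (m k : F) : Set F :=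
  {y | ∃ t, t ∈ I ∧ 0 ≤ t ∧ y = m * t + k}

/-- An element of `F` is rational (with respect to `I`) if it lies in the
fraction field of `I` viewed inside `F`. -/
def IsRat {F : Type*} [Field F] [LinearOrder F] [IsStrictOrderedRing F] (I : Subring F) (α : F) : Prop :=
  ∃ p ∈ I, ∃ q ∈ I, q ≠ 0 ∧ α = p / q

theorem stmt_17 {F : Type*} [Field F] [LinearOrder F] [IsStrictOrderedRing F] (I : Subring F) (fl : F → F)
    (hdisc : ∀ x ∈ I, ¬(0 < x ∧ x < 1))
    (hfl : ∀ x : F, fl x ∈ I ∧ fl x ≤ x ∧ x < fl x + 1)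
    (hP : ∀ γ : F, ¬ IsRat I γ → 1 < γ → ∀ m ∈ I, 0 < m → ∀ k ∈ I, 0 ≤ k →
        ∃ y ∈ Nset I fl γ ∩ AP I m k, y ≠ 0)
    (α : F) (hαirr : ¬ IsRat I α) (hα1 : 1 < α)
    (ρ : F) (hρrat : IsRat I ρ) (hρ1 : 1 < ρ) :
    ¬ (Nset I fl α ⊆ Nset I fl ρ) ∧
    ¬ (Nset I fl ρ ⊆ Nset I fl α) ∧
    Nset I fl α ∩ Nset I fl ρ ≠ {0} ∧
    Nset I fl α ∪ Nset I fl ρ ≠ Inonneg I := by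
  classical
  have hα0 : (0:F) < α := lt_trans one_pos hα1
  -- discreteness step
  have hstep : ∀ a ∈ I, ∀ b ∈ I, a < b → a + 1 ≤ b := by
    intro a ha b hb hab
    by_contra h
    push_neg at h
    exact hdisc (b - a) (I.sub_mem hb ha) ⟨by linarith, by linarith⟩
  -- fl of an element of I is itself
  have hflI : ∀ x : F, x ∈ I → fl x = x := by
    intro x hx
    obtain ⟨h1, h2, h3⟩ := hfl x
    have h0 := hdisc (x - fl x) (I.sub_mem hx h1)
    by_contra hne
    have hlt : fl x < x := lt_of_le_of_ne h2 hne
    exact h0 ⟨by linarith, by linarith⟩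
  have hfl0 : fl 0 = 0 := hflI 0 I.zero_mem
  -- fl of a nonnegative element is nonnegative
  have hflnn : ∀ x : F, 0 ≤ x → 0 ≤ fl x := by
    intro x hx
    obtain ⟨h1, h2, h3⟩ := hfl x
    by_contra h
    push_neg at h
    exact hdisc (-(fl x)) (I.neg_mem h1) ⟨by linarith, by linarith⟩
  -- normalize the rational number
  obtain ⟨p, q, hpI, hqI, hqpos, hρeq⟩ :
      ∃ p q, p ∈ I ∧ q ∈ I ∧ 0 < q ∧ ρ = p / q := by
    obtain ⟨p0, hp0, q0, hq0, hq0ne, hρ0⟩ := hρrat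
    rcases lt_or_gt_of_ne hq0ne with h | h
    · exact ⟨-p0, -q0, I.neg_mem hp0, I.neg_mem hq0, by linarith,
        by rw [hρ0, neg_div_neg_eq]⟩
    · exact ⟨p0, q0, hp0, hq0, h, hρ0⟩
  have hq1 : (1:F) ≤ q := by have := hstep 0 I.zero_mem q hqI hqpos; linarith
  have hρq : ρ * q = p := by rw [hρeq, div_mul_cancel₀ _ hqpos.ne']
  have hqp : q < p := by nlinarith
  have hppos : (0:F) < p := lt_trans hqpos hqp
  have hp2 : (1:F) ≤ p - 1 := by
    have := hstep q hqI p hpI hqp; linarith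
  -- Lemma A: p*t - 1 is never in N_ρ (for t ≥ 1)
  have lemA : ∀ t ∈ I, (1:F) ≤ t → p * t - 1 ∉ Nset I fl ρ := by
    rintro t htI ht1 ⟨n, hnI, hn0, hny⟩
    obtain ⟨_, h2, h3⟩ := hfl (n * ρ)
    rw [← hny] at h2 h3
    have hmul : n * ρ * q = n * p := by rw [mul_assoc, hρq]
    have h4 : n * p < p * t * q := by
      have := mul_lt_mul_of_pos_right (show n * ρ < p * t by linarith) hqpos
      rw [hmul] at this; linarith
    have h5 : (p * t - 1) * q ≤ n * p := by
      have := mul_le_mul_of_nonneg_right h2 hqpos.le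
      rw [hmul] at this; linarith
    have h6 : n < q * t := by nlinarith
    have h7 : q * t < n + 1 := by nlinarith
    have h8 := hstep n hnI (q * t) (I.mul_mem hqI htI) h6
    linarith
  -- Lemma B: p*t is in N_ρ (for t ≥ 0)
  have lemB : ∀ t ∈ I, (0:F) ≤ t → p * t ∈ Nset I fl ρ := by
    intro t htI ht0
    refine ⟨q * t, I.mul_mem hqI htI, by positivity, ?_⟩
    have : q * t * ρ = p * t := by
      rw [hρeq]; field_simp
    rw [this, hflI _ (I.mul_mem hpI htI)]
  -- the conjugate Beatty number
  set α' : F := α / (α - 1) with hα'def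
  have hαm1 : (0:F) < α - 1 := by linarith
  have hα'1 : 1 < α' := by
    rw [hα'def, lt_div_iff₀ hαm1]; linarith
  have hα'0 : (0:F) < α' := lt_trans one_pos hα'1
  have hα'mul : α' * (α - 1) = α := div_mul_cancel₀ _ hαm1.ne'
  have hα'irr : ¬ IsRat I α' := by
    rintro ⟨a, haI, b, hbI, hbne, hab⟩
    apply hαirr
    have habne : a - b ≠ 0 := by
      intro h
      have hab' : a = b := by linarith [sub_eq_zero.mp h]
      rw [hab', div_self hbne] at hab
      exact absurd hab (by linarith)
    refine ⟨a, haI, a - b, I.sub_mem haI hbI, habne, ?_⟩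
    have key : α * b = a * (α - 1) := by
      have := hα'mul
      rw [hab] at this
      field_simp at this
      linarith [this]
    rw [eq_div_iff habne]; linarith [key]
  -- Lemma C (Beatty, one direction): nonzero elements of N_{α'} are not in N_α
  have lemC : ∀ y, y ∈ Nset I fl α' → y ≠ 0 → y ∉ Nset I fl α := by
    rintro y ⟨n, hnI, hn0, hyn⟩ hyne ⟨m, hmI, hm0, hym⟩
    have hyI : y ∈ I := by rw [hyn]; exact (hfl _).1
    have hnne : n ≠ 0 := by
      intro h; rw [h, zero_mul, hfl0] at hyn; exact hyne hyn
    have hmne : m ≠ 0 := by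
      intro h; rw [h, zero_mul, hfl0] at hym; exact hyne hym
    have hnpos : 0 < n := lt_of_le_of_ne hn0 (Ne.symm hnne)
    have hmpos : 0 < m := lt_of_le_of_ne hm0 (Ne.symm hmne)
    obtain ⟨_, hn2, hn3⟩ := hfl (n * α')
    obtain ⟨_, hm2, hm3⟩ := hfl (m * α)
    rw [← hyn] at hn2 hn3
    rw [← hym] at hm2 hm3
    -- strict inequalities
    have hmα : y < m * α :=
      lt_of_le_of_ne hm2 (fun h =>
        hαirr ⟨y, hyI, m, hmI, hmne, by rw [eq_div_iff hmne]; linarith⟩)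
    have hnα : y < n * α' :=
      lt_of_le_of_ne hn2 (fun h =>
        hα'irr ⟨y, hyI, n, hnI, hnne, by rw [eq_div_iff hnne]; linarith⟩)
    -- eliminate divisions
    have h3 : y * (α - 1) < n * α := by
      have := mul_lt_mul_of_pos_right hnα hαm1
      rw [mul_assoc, hα'mul] at this; linarith
    have h4 : n * α < (y + 1) * (α - 1) := by
      have := mul_lt_mul_of_pos_right hn3 hαm1
      rw [mul_assoc, hα'mul] at this; linarith
    have hA : y * α < (m + n) * α := by
      have e : y * α = y + y * (α - 1) := by ring
      have e2 : (m + n) * α = m * α + n * α := by ring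
      rw [e, e2]; exact add_lt_add hmα h3
    have hB : (m + n) * α < (y + 1) * α := by
      have e : (y + 1) * α = (y + 1) + (y + 1) * (α - 1) := by ring
      have e2 : (m + n) * α = m * α + n * α := by ring
      rw [e, e2]; exact add_lt_add hm3 h4
    have hsum1 : y < m + n := lt_of_mul_lt_mul_right hA hα0.le
    have hsum2 : m + n < y + 1 := lt_of_mul_lt_mul_right hB hα0.le
    have := hstep y hyI (m + n) (I.add_mem hmI hnI) hsum1
    linarith
  refine ⟨?_, ?_, ?_, ?_⟩
  -- (1) ¬ N_α ⊆ N_ρ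
  · intro hsub
    obtain ⟨y, ⟨hyα, t, htI, ht0, hyt⟩, hyne⟩ :=
      hP α hαirr hα1 p hpI hppos (p - 1) (I.sub_mem hpI I.one_mem) (by linarith)
    have : p * (t + 1) - 1 ∈ Nset I fl ρ := by
      rw [show p * (t + 1) - 1 = p * t + (p - 1) by ring, ← hyt]
      exact hsub hyα
    exact lemA (t + 1) (I.add_mem htI I.one_mem) (by linarith) this
  -- (2) ¬ N_ρ ⊆ N_α
  · intro hsub
    obtain ⟨y, ⟨hyα', t, htI, ht0, hyt⟩, hyne⟩ :=
      hP α' hα'irr hα'1 p hpI hppos 0 I.zero_mem le_rfl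
    have hyρ : y ∈ Nset I fl ρ := by
      rw [hyt, add_zero]; exact lemB t htI ht0
    exact lemC y hyα' hyne (hsub hyρ)
  -- (3) N_α ∩ N_ρ ≠ {0}
  · intro h
    obtain ⟨y, ⟨hyα, t, htI, ht0, hyt⟩, hyne⟩ :=
      hP α hαirr hα1 p hpI hppos 0 I.zero_mem le_rfl
    have hyρ : y ∈ Nset I fl ρ := by
      rw [hyt, add_zero]; exact lemB t htI ht0
    have : y ∈ ({0} : Set F) := h ▸ ⟨hyα, hyρ⟩
    exact hyne this
  -- (4) N_α ∪ N_ρ ≠ I^{≥0}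
  · intro h
    obtain ⟨y, ⟨hyα', t, htI, ht0, hyt⟩, hyne⟩ :=
      hP α' hα'irr hα'1 p hpI hppos (p - 1) (I.sub_mem hpI I.one_mem) (by linarith)
    obtain ⟨n, hnI, hn0, hyn⟩ := hyα'
    have hyI : y ∈ Inonneg I := by
      refine ⟨by rw [hyn]; exact (hfl _).1, ?_⟩
      rw [hyn]; exact hflnn _ (by positivity)
    rw [← h] at hyI
    rcases hyI with hy | hy
    · exact lemC y ⟨n, hnI, hn0, hyn⟩ hyne hy
    · apply lemA (t + 1) (I.add_mem htI I.one_mem) (by linarith)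
      rw [show p * (t + 1) - 1 = p * t + (p - 1) by ring, ← hyt]
      exact hy
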